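/- Let {Q_i}_{i=1}^n be n pairwise disjoint nonempty subsets of V, let Q* be the complement of their union, and for j ∈ {1,…,n} set S_j := (1/n)( ∂(Q_j ∪ Q*)/π(Q_j ∪ Q*) + ∑_{i≠j} ∂(Q_i)/π(Q_i) ), where ∂(Q) = ∑_{u∈Q,v∉Q} φ(u,v). Then min_j S_j ≤ (1/(n(1+(n−1)π(Q*)))) · ( (n−2)∂(Q*) + (1+(n−2)π(Q*)) ∑_{i=1}^n ∂(Q_i)/π(Q_i) ). -/
import Mathlib


open Finset

/-- Outgoing boundary flow `∂(Q) = ∑_{u∈Q, v∉Q} K(u,v)π(u)`. -/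
noncomputable def dpart {V : Type*} [Fintype V] [DecidableEq V]
    (K : V → V → ℝ) (π : V → ℝ) (Q : Finset V) : ℝ :=
  ∑ u ∈ Q, ∑ v ∈ Qᶜ, K u v * π u

/-- `π(Q) = ∑_{u∈Q} π(u)`. -/
noncomputable def pim {V : Type*} (π : V → ℝ) (Q : Finset V) : ℝ :=
  ∑ u ∈ Q, π u

/-- flow from A to B -/
noncomputable def fl {V : Type*} [Fintype V] [DecidableEq V]
    (K : V → V → ℝ) (π : V → ℝ) (A B : Finset V) : ℝ :=
  ∑ u ∈ A, ∑ v ∈ B, K u v * π u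

lemma fl_left_union {V : Type*} [Fintype V] [DecidableEq V]
    (K : V → V → ℝ) (π : V → ℝ) {A B : Finset V} (C : Finset V) (h : Disjoint A B) :
    fl K π (A ∪ B) C = fl K π A C + fl K π B C :=
  Finset.sum_union h

lemma fl_right_union {V : Type*} [Fintype V] [DecidableEq V]
    (K : V → V → ℝ) (π : V → ℝ) (A : Finset V) {B C : Finset V} (h : Disjoint B C) :
    fl K π A (B ∪ C) = fl K π A B + fl K π A C := by
  unfold fl
  rw [← Finset.sum_add_distrib]
  exact Finset.sum_congr rfl fun u _ => Finset.sum_union h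

lemma fl_comm {V : Type*} [Fintype V] [DecidableEq V]
    (K : V → V → ℝ) (π : V → ℝ) (A B : Finset V) :
    fl K π A B = ∑ v ∈ B, ∑ u ∈ A, K u v * π u :=
  Finset.sum_comm

lemma dpart_eq_fl {V : Type*} [Fintype V] [DecidableEq V]
    (K : V → V → ℝ) (π : V → ℝ) (Q : Finset V) :
    dpart K π Q = fl K π Q Qᶜ := rfl

lemma dpart_compl {V : Type*} [Fintype V] [DecidableEq V]
    (K : V → V → ℝ) (π : V → ℝ)
    (hK1 : ∀ u, ∑ v, K u v = 1) (hstat : ∀ v, ∑ u, π u * K u v = π v)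
    (Q : Finset V) : dpart K π Q = dpart K π Qᶜ := by
  unfold dpart
  rw [compl_compl]
  have h1 : ∀ u ∈ Q, ∑ v ∈ Qᶜ, K u v * π u = π u - ∑ v ∈ Q, K u v * π u := by
    intro u _
    have h := Finset.sum_compl_add_sum Q (fun v => K u v * π u)
    have h2 : ∑ v, K u v * π u = π u := by
      rw [← Finset.sum_mul, hK1, one_mul]
    linarith
  have h2 : ∀ v ∈ Q, ∑ u ∈ Qᶜ, K u v * π u = π v - ∑ u ∈ Q, K u v * π u := by
    intro v _
    have h := Finset.sum_compl_add_sum Q (fun u => K u v * π u)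
    have h3 : ∑ u, K u v * π u = π v := by
      rw [← hstat v]
      exact Finset.sum_congr rfl fun u _ => mul_comm _ _
    linarith
  rw [Finset.sum_congr rfl h1, Finset.sum_comm, Finset.sum_congr rfl h2,
    Finset.sum_sub_distrib, Finset.sum_sub_distrib]
  congr 1
  exact Finset.sum_comm

lemma compl_eq_union {V : Type*} [Fintype V] [DecidableEq V]
    {A B : Finset V} (h : Disjoint A B) : Aᶜ = (A ∪ B)ᶜ ∪ B := by
  ext v
  simp only [Finset.mem_compl, Finset.mem_union, not_or]
  constructor
  · intro hv
    by_cases hb : v ∈ B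
    · exact Or.inr hb
    · exact Or.inl ⟨hv, hb⟩
  · rintro (⟨hv, _⟩ | hb)
    · exact hv
    · exact fun ha => (Finset.disjoint_left.mp h ha) hb

lemma dpart_union {V : Type*} [Fintype V] [DecidableEq V]
    (K : V → V → ℝ) (π : V → ℝ) {A B : Finset V} (h : Disjoint A B) :
    dpart K π (A ∪ B) = dpart K π A + dpart K π B - fl K π A B - fl K π B A := by
  have hd1 : Disjoint ((A ∪ B)ᶜ) B :=
    Finset.disjoint_left.mpr fun v hv hb => (Finset.mem_compl.mp hv) (Finset.mem_union_right _ hb)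
  have hd2 : Disjoint ((A ∪ B)ᶜ) A :=
    Finset.disjoint_left.mpr fun v hv ha => (Finset.mem_compl.mp hv) (Finset.mem_union_left _ ha)
  have hA : dpart K π A = fl K π A ((A ∪ B)ᶜ) + fl K π A B := by
    rw [dpart_eq_fl, compl_eq_union h, fl_right_union K π A hd1]
  have hB : dpart K π B = fl K π B ((A ∪ B)ᶜ) + fl K π B A := by
    rw [dpart_eq_fl, compl_eq_union h.symm, Finset.union_comm B A, fl_right_union K π B hd2]
  have hAB : dpart K π (A ∪ B) = fl K π A ((A ∪ B)ᶜ) + fl K π B ((A ∪ B)ᶜ) := by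
    rw [dpart_eq_fl, fl_left_union K π _ h]
  linarith

theorem min_Sj_bound {V : Type*} [Fintype V] [DecidableEq V]
    (K : V → V → ℝ) (π : V → ℝ)
    (hK0 : ∀ u v, 0 ≤ K u v) (hK1 : ∀ u, ∑ v, K u v = 1)
    (hπ : ∀ u, 0 < π u) (hπ1 : ∑ u, π u = 1)
    (hstat : ∀ v, ∑ u, π u * K u v = π v)
    (n : ℕ) (hn : 0 < n) (Q : Fin n → Finset V)
    (hQne : ∀ i, (Q i).Nonempty)
    (hQdisj : Pairwise (Function.onFun Disjoint Q))
    (Qs : Finset V) (hQs : Qs = (Finset.univ.biUnion Q)ᶜ)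
    (S : Fin n → ℝ)
    (hS : ∀ j, S j = (1 / (n : ℝ)) *
      (dpart K π (Q j ∪ Qs) / pim π (Q j ∪ Qs)
        + ∑ i ∈ Finset.univ.erase j, dpart K π (Q i) / pim π (Q i))) :
    ∃ j, S j ≤ (1 / ((n : ℝ) * (1 + ((n : ℝ) - 1) * pim π Qs))) *
      (((n : ℝ) - 2) * dpart K π Qs
        + (1 + ((n : ℝ) - 2) * pim π Qs) * ∑ i, dpart K π (Q i) / pim π (Q i)) := by
  have hnR : (0 : ℝ) < n := Nat.cast_pos.mpr hn
  have hBU : Qsᶜ = Finset.univ.biUnion Q := by rw [hQs, compl_compl]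
  have hPD : Set.PairwiseDisjoint (↑(Finset.univ : Finset (Fin n))) Q :=
    fun i _ j _ hij => hQdisj hij
  have hdisjQ : ∀ j, Disjoint (Q j) Qs := by
    intro j
    refine Finset.disjoint_left.mpr fun a ha has => ?_
    rw [hQs, Finset.mem_compl] at has
    exact has (Finset.mem_biUnion.mpr ⟨j, Finset.mem_univ j, ha⟩)
  -- positivity facts
  have hpimQ : ∀ j, 0 < pim π (Q j) := fun j =>
    Finset.sum_pos (fun u _ => hπ u) (hQne j)
  have hpimQs : 0 ≤ pim π Qs := Finset.sum_nonneg fun u _ => (hπ u).le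
  have hpim_union : ∀ j, pim π (Q j ∪ Qs) = pim π (Q j) + pim π Qs := fun j =>
    Finset.sum_union (hdisjQ j)
  have hwpos : ∀ j, 0 < pim π (Q j ∪ Qs) := by
    intro j; rw [hpim_union j]; linarith [hpimQ j]
  -- total weight
  have hsum_pimQ : ∑ j, pim π (Q j) = 1 - pim π Qs := by
    have h1 : ∑ j, pim π (Q j) = pim π (Qsᶜ) := by
      rw [hBU]; exact (Finset.sum_biUnion hPD).symm
    have h2 : pim π (Qsᶜ) + pim π Qs = 1 := by
      rw [← hπ1]; exact Finset.sum_compl_add_sum Qs π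
    linarith
  set W : ℝ := 1 + ((n : ℝ) - 1) * pim π Qs with hW
  have hsumw : ∑ j, pim π (Q j ∪ Qs) = W := by
    rw [Finset.sum_congr rfl fun j _ => hpim_union j, Finset.sum_add_distrib,
      hsum_pimQ, Finset.sum_const, Finset.card_univ, Fintype.card_fin, nsmul_eq_mul]
    ring
  have hWpos : 0 < W := by
    have : (1:ℝ) ≤ (n:ℝ) := by exact_mod_cast hn
    nlinarith
  -- flow sums over the pieces
  have hfl_left : ∑ j, fl K π (Q j) Qs = dpart K π Qs := by
    have h1 : ∑ j, fl K π (Q j) Qs = fl K π (Qsᶜ) Qs := by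
      rw [hBU]; exact (Finset.sum_biUnion hPD).symm
    have h2 : fl K π (Qsᶜ) Qs = dpart K π (Qsᶜ) := by
      rw [dpart_eq_fl, compl_compl]
    rw [h1, h2, ← dpart_compl K π hK1 hstat]
  have hfl_right : ∑ j, fl K π Qs (Q j) = dpart K π Qs := by
    have h1 : ∑ j, fl K π Qs (Q j) = fl K π Qs (Qsᶜ) := by
      rw [fl_comm K π Qs (Qsᶜ), hBU, Finset.sum_biUnion hPD]
      exact Finset.sum_congr rfl fun j _ => fl_comm K π Qs (Q j)
    rw [h1, ← dpart_eq_fl]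
  -- key identity on boundary of unions
  have hX : ∑ j, dpart K π (Q j ∪ Qs)
      = ∑ j, dpart K π (Q j) + ((n : ℝ) - 2) * dpart K π Qs := by
    rw [Finset.sum_congr rfl fun j _ => dpart_union K π (hdisjQ j)]
    rw [Finset.sum_sub_distrib, Finset.sum_sub_distrib, Finset.sum_add_distrib,
      hfl_left, hfl_right, Finset.sum_const, Finset.card_univ, Fintype.card_fin,
      nsmul_eq_mul]
    ring
  set B : ℝ := ∑ i, dpart K π (Q i) / pim π (Q i) with hB
  -- weighted sum of S
  have hwS : ∀ j, pim π (Q j ∪ Qs) * S j = (1 / (n : ℝ)) *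
      (dpart K π (Q j ∪ Qs) + pim π (Q j ∪ Qs) * (B - dpart K π (Q j) / pim π (Q j))) := by
    intro j
    rw [hS j]
    have herase : ∑ i ∈ Finset.univ.erase j, dpart K π (Q i) / pim π (Q i)
        = B - dpart K π (Q j) / pim π (Q j) :=
      Finset.sum_erase_eq_sub (Finset.mem_univ j)
    rw [herase]
    have hc : pim π (Q j ∪ Qs) * (dpart K π (Q j ∪ Qs) / pim π (Q j ∪ Qs))
        = dpart K π (Q j ∪ Qs) := by
      rw [mul_comm, div_mul_cancel₀ _ (ne_of_gt (hwpos j))]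
    rw [show pim π (Q j ∪ Qs) * ((1 / (n : ℝ)) *
        (dpart K π (Q j ∪ Qs) / pim π (Q j ∪ Qs)
          + (B - dpart K π (Q j) / pim π (Q j))))
      = (1 / (n : ℝ)) * (pim π (Q j ∪ Qs) * (dpart K π (Q j ∪ Qs) / pim π (Q j ∪ Qs))
          + pim π (Q j ∪ Qs) * (B - dpart K π (Q j) / pim π (Q j))) from by ring, hc]
  have hwb : ∀ j, pim π (Q j ∪ Qs) * (dpart K π (Q j) / pim π (Q j))
      = dpart K π (Q j) + pim π Qs * (dpart K π (Q j) / pim π (Q j)) := by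
    intro j
    rw [hpim_union j, add_mul]
    congr 1
    rw [mul_comm, div_mul_cancel₀ _ (ne_of_gt (hpimQ j))]
  have hsumwb : ∑ j, pim π (Q j ∪ Qs) * (dpart K π (Q j) / pim π (Q j))
      = ∑ j, dpart K π (Q j) + pim π Qs * B := by
    rw [Finset.sum_congr rfl fun j _ => hwb j, Finset.sum_add_distrib, ← Finset.mul_sum]
  set M : ℝ := ((n : ℝ) - 2) * dpart K π Qs + (1 + ((n : ℝ) - 2) * pim π Qs) * B with hM
  have hT : ∑ j, pim π (Q j ∪ Qs) * S j = (1 / (n : ℝ)) * M := by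
    rw [Finset.sum_congr rfl fun j _ => hwS j, ← Finset.mul_sum]
    congr 1
    rw [Finset.sum_add_distrib, hX]
    have h1 : ∑ j, pim π (Q j ∪ Qs) * (B - dpart K π (Q j) / pim π (Q j))
        = W * B - (∑ j, dpart K π (Q j) + pim π Qs * B) := by
      rw [Finset.sum_congr rfl fun j _ => mul_sub (pim π (Q j ∪ Qs)) B _,
        Finset.sum_sub_distrib, ← Finset.sum_mul, hsumw, hsumwb]
    rw [h1, hM, hW]
    ring
  -- choose the minimizer
  have hne : (Finset.univ : Finset (Fin n)).Nonempty := ⟨⟨0, hn⟩, Finset.mem_univ _⟩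
  obtain ⟨j0, -, hj0⟩ := Finset.exists_min_image Finset.univ S hne
  refine ⟨j0, ?_⟩
  have hmin : W * S j0 ≤ (1 / (n : ℝ)) * M := by
    calc W * S j0 = ∑ j, pim π (Q j ∪ Qs) * S j0 := by rw [← hsumw, Finset.sum_mul]
      _ ≤ ∑ j, pim π (Q j ∪ Qs) * S j :=
          Finset.sum_le_sum fun j _ =>
            mul_le_mul_of_nonneg_left (hj0 j (Finset.mem_univ j)) (hwpos j).le
      _ = (1 / (n : ℝ)) * M := hT
  have h2 : S j0 ≤ (1 / (n : ℝ)) * M / W :=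
    (le_div_iff₀ hWpos).mpr (by linarith)
  have heq : (1 / ((n : ℝ) * W)) * M = (1 / (n : ℝ)) * M / W := by
    field_simp
  rw [heq]
  exact h2
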